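/- The kernel of the asymptotic function of E(u) = (1/p)‖Au − b‖_p^p + λ(‖∇₁u‖₀ + ‖∇₂u‖₀) equals the kernel of A, i.e., {u : E_∞(u) = 0} = ker(A). -/

import Mathlib

open Filter Topology

/-- Grouped ℓ⁰ semi-norm: number of grid points where the d-dimensional group is nonzero. -/
noncomputable def l0 {n d : ℕ} (u : Fin n → Fin d → ℝ) : ℝ :=
  Set.ncard {i : Fin n | u i ≠ 0}

/-- The Potts-regularized functional E(u) = (1/p)‖Au − b‖_p^p + λ(‖∇₁u‖₀ + ‖∇₂u‖₀). -/
noncomputable def pottsE {ng d m : ℕ}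
    (A : (Fin ng → Fin d → ℝ) →ₗ[ℝ] (Fin m → ℝ)) (b : Fin m → ℝ)
    (D1 D2 : (Fin ng → Fin d → ℝ) →ₗ[ℝ] (Fin ng → Fin d → ℝ))
    (p lam : ℝ) (u : Fin ng → Fin d → ℝ) : ℝ :=
  (1 / p) * ∑ i, |A u i - b i| ^ p + lam * (l0 (D1 u) + l0 (D2 u))

/-- Asymptotic (recession) function: E_∞(u) = liminf_{u'→u, t→∞} E(tu')/t. -/
noncomputable def pottsEinf {ng d m : ℕ}
    (A : (Fin ng → Fin d → ℝ) →ₗ[ℝ] (Fin m → ℝ)) (b : Fin m → ℝ)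
    (D1 D2 : (Fin ng → Fin d → ℝ) →ₗ[ℝ] (Fin ng → Fin d → ℝ))
    (p lam : ℝ) (u : Fin ng → Fin d → ℝ) : EReal :=
  Filter.liminf
    (fun x : (Fin ng → Fin d → ℝ) × ℝ =>
      ((pottsE A b D1 D2 p lam (x.2 • x.1) / x.2 : ℝ) : EReal))
    ((nhds u) ×ˢ atTop)
lemma l0_nonneg {n d : ℕ} (u : Fin n → Fin d → ℝ) : 0 ≤ l0 u := by
  simp [l0]

lemma l0_smul {n d : ℕ} {t : ℝ} (ht : t ≠ 0) (u : Fin n → Fin d → ℝ) :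
    l0 (t • u) = l0 u := by
  unfold l0
  have : {i : Fin n | (t • u) i ≠ 0} = {i : Fin n | u i ≠ 0} := by
    ext i
    simp [Pi.smul_apply, smul_eq_mul, funext_iff, ht]
  rw [this]

lemma pottsE_nonneg {ng d m : ℕ}
    (A : (Fin ng → Fin d → ℝ) →ₗ[ℝ] (Fin m → ℝ)) (b : Fin m → ℝ)
    (D1 D2 : (Fin ng → Fin d → ℝ) →ₗ[ℝ] (Fin ng → Fin d → ℝ))
    (p lam : ℝ) (hp : 1 ≤ p) (hlam : 0 < lam) (u : Fin ng → Fin d → ℝ) :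
    0 ≤ pottsE A b D1 D2 p lam u := by
  unfold pottsE
  have hp0 : (0:ℝ) < p := lt_of_lt_of_le one_pos hp
  have h1 : 0 ≤ (1/p) * ∑ i, |A u i - b i| ^ p := by
    apply mul_nonneg (by positivity)
    exact Finset.sum_nonneg fun i _ => Real.rpow_nonneg (abs_nonneg _) _
  have h2 : 0 ≤ lam * (l0 (D1 u) + l0 (D2 u)) :=
    mul_nonneg hlam.le (add_nonneg (l0_nonneg _) (l0_nonneg _))
  linarith

/-- The kernel of the asymptotic function of E equals the kernel of A. -/
theorem stmt1 {ng d m : ℕ}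
    (A : (Fin ng → Fin d → ℝ) →ₗ[ℝ] (Fin m → ℝ)) (b : Fin m → ℝ)
    (D1 D2 : (Fin ng → Fin d → ℝ) →ₗ[ℝ] (Fin ng → Fin d → ℝ))
    (p lam : ℝ) (hp : 1 ≤ p) (hlam : 0 < lam) :
    {u : Fin ng → Fin d → ℝ | pottsEinf A b D1 D2 p lam u = 0} =
      {u : Fin ng → Fin d → ℝ | A u = 0} := by
  have hp0 : (0:ℝ) < p := lt_of_lt_of_le one_pos hp
  ext u
  simp only [Set.mem_setOf_eq]
  constructor
  · -- liminf = 0 → A u = 0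
    intro h
    by_contra hA
    -- pick coordinate i with A u i ≠ 0
    obtain ⟨i, hi⟩ : ∃ i, A u i ≠ 0 := by
      by_contra hc
      push_neg at hc
      exact hA (funext hc)
    set c : ℝ := |A u i| with hc_def
    have hc : 0 < c := abs_pos.mpr hi
    set δ : ℝ := c / (4 * p) with hδ_def
    have hδ : 0 < δ := by positivity
    -- eventually |A u' i| ≥ c/2
    have hcont : Continuous fun v : Fin ng → Fin d → ℝ => A v i :=
      ((LinearMap.proj i).comp A).continuous_of_finiteDimensional
    have hev1 : ∀ᶠ v : Fin ng → Fin d → ℝ in nhds u, c/2 < |A v i| := by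
      have : Tendsto (fun v : Fin ng → Fin d → ℝ => |A v i|) (nhds u) (nhds c) := by
        exact (hcont.abs.tendsto u)
      exact this.eventually_const_lt (by linarith)
    set T : ℝ := max 1 (4 * (|b i| + 1) / c) with hT_def
    have key : ∀ᶠ x : (Fin ng → Fin d → ℝ) × ℝ in (nhds u) ×ˢ atTop,
        ((δ : ℝ) : EReal) ≤ ((pottsE A b D1 D2 p lam (x.2 • x.1) / x.2 : ℝ) : EReal) := by
      filter_upwards [hev1.prod_inl atTop, (eventually_ge_atTop T).prod_inr (nhds u)]
        with x hx1 hx2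
      set v := x.1
      set t := x.2
      have ht1 : (1:ℝ) ≤ t := le_trans (le_max_left _ _) hx2
      have ht0 : (0:ℝ) < t := lt_of_lt_of_le one_pos ht1
      have htb : 4 * (|b i| + 1) / c ≤ t := le_trans (le_max_right _ _) hx2
      have htb' : 4 * (|b i| + 1) ≤ t * c := by
        rw [div_le_iff₀ hc] at htb; linarith
      -- |t * A v i - b i| ≥ t*c/2 - |b i|
      have h1 : |A (t • v) i - b i| = |t * A v i - b i| := by
        simp [map_smul]
      have h2 : t * c / 2 - |b i| ≤ |t * A v i - b i| := by
        have := abs_sub_abs_le_abs_sub (t * A v i) (b i)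
        have h3 : t * (c/2) ≤ |t * A v i| := by
          rw [abs_mul, abs_of_pos ht0]
          exact mul_le_mul_of_nonneg_left hx1.le ht0.le
        nlinarith
      have hs1 : (1:ℝ) ≤ t * c / 2 - |b i| := by nlinarith [abs_nonneg (b i)]
      have hs0 : (0:ℝ) ≤ t * c / 2 - |b i| := by linarith
      -- rpow bound
      have hpow : t * c / 2 - |b i| ≤ |A (t • v) i - b i| ^ p := by
        rw [h1]
        calc t * c / 2 - |b i| = (t * c / 2 - |b i|) ^ (1:ℝ) := by rw [Real.rpow_one]
          _ ≤ (t * c / 2 - |b i|) ^ p := Real.rpow_le_rpow_of_exponent_le hs1 hp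
          _ ≤ |t * A v i - b i| ^ p := Real.rpow_le_rpow hs0 h2 hp0.le
      -- E ≥ (1/p) * that term
      have hE : (1/p) * (t * c / 2 - |b i|) ≤ pottsE A b D1 D2 p lam (t • v) := by
        unfold pottsE
        have hsum : |A (t • v) i - b i| ^ p ≤ ∑ j, |A (t • v) j - b j| ^ p :=
          Finset.single_le_sum (f := fun j => |A (t • v) j - b j| ^ p)
            (fun j _ => Real.rpow_nonneg (abs_nonneg _) _) (Finset.mem_univ i)
        have hreg : 0 ≤ lam * (l0 (D1 (t • v)) + l0 (D2 (t • v))) :=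
          mul_nonneg hlam.le (add_nonneg (l0_nonneg _) (l0_nonneg _))
        have := mul_le_mul_of_nonneg_left (le_trans hpow hsum) (by positivity : (0:ℝ) ≤ 1/p)
        linarith
      have hfinal : δ ≤ pottsE A b D1 D2 p lam (t • v) / t := by
        rw [le_div_iff₀ ht0]
        calc δ * t = (1/p) * (t * c / 4) := by
              rw [hδ_def]; field_simp
          _ ≤ (1/p) * (t * c / 2 - |b i|) := by
              apply mul_le_mul_of_nonneg_left _ (by positivity : (0:ℝ) ≤ 1/p)
              nlinarith
          _ ≤ pottsE A b D1 D2 p lam (t • v) := hE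
      exact_mod_cast EReal.coe_le_coe_iff.mpr hfinal
    have hle : ((δ : ℝ) : EReal) ≤ pottsEinf A b D1 D2 p lam u :=
      Filter.le_liminf_of_le (by isBoundedDefault) key
    rw [h] at hle
    have : (0:ℝ) < δ := hδ
    exact absurd hle (by exact_mod_cast not_le.mpr (by exact_mod_cast this))
  · -- A u = 0 → liminf = 0
    intro hA
    apply le_antisymm
    · -- liminf ≤ 0 : compare with pure u ×ˢ atTop
      have hsub : (pure u : Filter (Fin ng → Fin d → ℝ)) ×ˢ (atTop : Filter ℝ) ≤ (nhds u) ×ˢ atTop :=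
        Filter.prod_mono (pure_le_nhds u) le_rfl
      have hmono := Filter.liminf_le_liminf_of_le (u := fun x : (Fin ng → Fin d → ℝ) × ℝ =>
        ((pottsE A b D1 D2 p lam (x.2 • x.1) / x.2 : ℝ) : EReal)) hsub
      have htend : Tendsto (fun x : (Fin ng → Fin d → ℝ) × ℝ =>
          ((pottsE A b D1 D2 p lam (x.2 • x.1) / x.2 : ℝ) : EReal))
          ((pure u) ×ˢ atTop) (nhds (0 : EReal)) := by
        rw [Filter.pure_prod, Filter.tendsto_map'_iff]
        show Tendsto (fun t : ℝ => ((pottsE A b D1 D2 p lam (t • u) / t : ℝ) : EReal))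
          atTop (nhds (((0:ℝ) : EReal)))
        rw [EReal.tendsto_coe]
        have hconst : ∀ᶠ t : ℝ in atTop,
            pottsE A b D1 D2 p lam u / t
              = pottsE A b D1 D2 p lam (t • u) / t := by
          filter_upwards [eventually_gt_atTop (0:ℝ)] with t ht
          congr 1
          unfold pottsE
          rw [map_smul A, hA, smul_zero, map_smul D1, map_smul D2,
            l0_smul ht.ne' (D1 u), l0_smul ht.ne' (D2 u)]
        exact Tendsto.congr' hconst
          ((tendsto_const_nhds).div_atTop tendsto_id)
      have hpure : Filter.liminf (fun x : (Fin ng → Fin d → ℝ) × ℝ =>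
          ((pottsE A b D1 D2 p lam (x.2 • x.1) / x.2 : ℝ) : EReal))
          ((pure u) ×ˢ atTop) = 0 := htend.liminf_eq
      calc pottsEinf A b D1 D2 p lam u ≤ _ := hmono
        _ = 0 := hpure
    · -- 0 ≤ liminf
      apply Filter.le_liminf_of_le (by isBoundedDefault)
      filter_upwards [(eventually_gt_atTop (0:ℝ)).prod_inr (nhds u)] with x hx
      have h0 : 0 ≤ pottsE A b D1 D2 p lam (x.2 • x.1) / x.2 :=
        div_nonneg (pottsE_nonneg A b D1 D2 p lam hp hlam _) hx.le
      exact_mod_cast EReal.coe_nonneg.mpr h0
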